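/- Energy identity for the linear part of the semi-discrete scheme: let (e^k)_{k≥0} ⊂ X_M satisfy δ_t² e^k := (e^{k+1} − 2e^k + e^{k−1})/τ² and define A^k = ‖δ_t⁺e^k‖² + (1/2)(‖e^k‖² + ‖e^{k+1}‖² + ‖δ_x⁺e^k‖² + ‖δ_x⁺e^{k+1}‖²) with δ_t⁺e^k = (e^{k+1} − e^k)/τ. If δ_t² e_j^k = (δ_x² − 1) (e_j^{k+1} + e_j^{k−1})/2 + R_j^k for j = 1,…,M−1 with e^k ∈ X_M, then A^k − A^{k−1} = (R^k, e^{k+1} − e^{k−1}) for all k ≥ 1. -/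

import Mathlib

/-- ‖·‖² norm over interior points -/
noncomputable def nrm2 (h : ℝ) (M : ℕ) (u : ℕ → ℝ) : ℝ := h * ∑ j ∈ Finset.Icc 1 (M - 1), u j ^ 2

/-- ‖δ_x⁺ ·‖² seminorm -/
noncomputable def nrmx2 (h : ℝ) (M : ℕ) (u : ℕ → ℝ) : ℝ :=
  h * ∑ j ∈ Finset.range M, ((u (j + 1) - u j) / h) ^ 2

/-- inner product over interior points -/
noncomputable def iprod (h : ℝ) (M : ℕ) (u v : ℕ → ℝ) : ℝ := h * ∑ j ∈ Finset.Icc 1 (M - 1), u j * v j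

/-- discrete energy A^k -/
noncomputable def energyA (h τ : ℝ) (M : ℕ) (e : ℕ → ℕ → ℝ) (k : ℕ) : ℝ :=
  nrm2 h M (fun j => (e (k + 1) j - e k j) / τ)
    + 1 / 2 * (nrm2 h M (e k) + nrm2 h M (e (k + 1))
        + nrmx2 h M (e k) + nrmx2 h M (e (k + 1)))

lemma sbp (M : ℕ) (hM : 1 ≤ M) (u v : ℕ → ℝ) (hv0 : v 0 = 0) (hvM : v M = 0) :
    ∑ j ∈ Finset.Icc 1 (M - 1), (u (j + 1) - 2 * u j + u (j - 1)) * v j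
      = - ∑ j ∈ Finset.range M, (u (j + 1) - u j) * (v (j + 1) - v j) := by
  have hIcc : Finset.Icc 1 (M - 1) = Finset.Ico 1 M := by
    rw [← Finset.Ico_add_one_right_eq_Icc]
    congr 1
    omega
  have hext : ∑ j ∈ Finset.Icc 1 (M - 1), (u (j + 1) - 2 * u j + u (j - 1)) * v j
      = ∑ j ∈ Finset.range M, (u (j + 1) - 2 * u j + u (j - 1)) * v j := by
    rw [hIcc]
    apply Finset.sum_subset
    · intro x hx
      simp only [Finset.mem_Ico] at hx
      simp [hx.2]
    · intro x hx hx'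
      have hx0 : x = 0 := by
        simp only [Finset.mem_range] at hx
        simp only [Finset.mem_Ico] at hx'
        omega
      subst hx0; simp [hv0]
  have tele := Finset.sum_range_sub (fun j => (u j - u (j - 1)) * v j) M
  simp only [Nat.add_sub_cancel, hv0, hvM, mul_zero, sub_zero] at tele
  have key : ∑ j ∈ Finset.range M,
      ((u (j + 1) - u j) * (v (j + 1) - v j) + (u (j + 1) - 2 * u j + u (j - 1)) * v j) = 0 := by
    rw [Finset.sum_congr rfl (fun j _ => show
      (u (j + 1) - u j) * (v (j + 1) - v j) + (u (j + 1) - 2 * u j + u (j - 1)) * v j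
        = (u (j + 1) - u j) * v (j + 1) - (u j - u (j - 1)) * v j from by ring), tele]
  rw [Finset.sum_add_distrib] at key
  linarith [hext]

theorem stmt_18 (M : ℕ) (hM : 2 ≤ M) (h τ : ℝ) (hh : 0 < h) (hτ : 0 < τ)
    (e R : ℕ → ℕ → ℝ)
    (hbc : ∀ k, e k 0 = 0 ∧ e k M = 0)
    (hRbc : ∀ k, R k 0 = 0 ∧ R k M = 0)
    (hscheme : ∀ k ≥ 1, ∀ j ∈ Finset.Icc 1 (M - 1),
      (e (k + 1) j - 2 * e k j + e (k - 1) j) / τ ^ 2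
        = ((e (k + 1) (j + 1) - 2 * e (k + 1) j + e (k + 1) (j - 1)) / h ^ 2
              + (e (k - 1) (j + 1) - 2 * e (k - 1) j + e (k - 1) (j - 1)) / h ^ 2) / 2
          - (e (k + 1) j + e (k - 1) j) / 2 + R k j) :
    ∀ k ≥ 1, energyA h τ M e k - energyA h τ M e (k - 1)
      = iprod h M (R k) (fun j => e (k + 1) j - e (k - 1) j) := by
  intro k hk
  have hk1 : k - 1 + 1 = k := Nat.succ_pred_eq_of_pos hk
  have hh0 : h ≠ 0 := ne_of_gt hh
  have hτ0 : τ ≠ 0 := ne_of_gt hτ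
  set a : ℕ → ℝ := e (k - 1) with ha
  set b : ℕ → ℝ := e k with hb
  set c : ℕ → ℝ := e (k + 1) with hc
  -- scalar abbreviations
  set D1 : ℝ := ∑ j ∈ Finset.Icc 1 (M - 1), (c j - b j) ^ 2 with hD1
  set D0 : ℝ := ∑ j ∈ Finset.Icc 1 (M - 1), (b j - a j) ^ 2 with hD0
  set N1 : ℝ := ∑ j ∈ Finset.Icc 1 (M - 1), c j ^ 2 with hN1
  set N0 : ℝ := ∑ j ∈ Finset.Icc 1 (M - 1), a j ^ 2 with hN0
  set X1 : ℝ := ∑ j ∈ Finset.range M, (c (j + 1) - c j) ^ 2 with hX1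
  set X0 : ℝ := ∑ j ∈ Finset.range M, (a (j + 1) - a j) ^ 2 with hX0
  set P : ℝ := ∑ j ∈ Finset.Icc 1 (M - 1), R k j * (c j - a j) with hP
  -- step 1: sum the scheme multiplied by (c j - a j)
  have hsum : D1 / τ ^ 2 - D0 / τ ^ 2
      = (∑ j ∈ Finset.Icc 1 (M - 1),
          ((c (j + 1) - 2 * c j + c (j - 1)) + (a (j + 1) - 2 * a j + a (j - 1)))
              * (c j - a j)) / (2 * h ^ 2)
        - (∑ j ∈ Finset.Icc 1 (M - 1), (c j + a j) * (c j - a j)) / 2 + P := by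
    have step : ∀ j ∈ Finset.Icc 1 (M - 1),
        (c j - b j) ^ 2 / τ ^ 2 - (b j - a j) ^ 2 / τ ^ 2
          = (((c (j + 1) - 2 * c j + c (j - 1)) + (a (j + 1) - 2 * a j + a (j - 1)))
                * (c j - a j)) / (2 * h ^ 2)
            - (c j + a j) * (c j - a j) / 2 + R k j * (c j - a j) := by
      intro j hj
      have hs := hscheme k hk j hj
      rw [← ha, ← hb, ← hc] at hs
      linear_combination (c j - a j) * hs
    have := Finset.sum_congr rfl step
    rw [Finset.sum_sub_distrib, Finset.sum_add_distrib, Finset.sum_sub_distrib,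
        ← Finset.sum_div, ← Finset.sum_div, ← Finset.sum_div, ← Finset.sum_div] at this
    exact this
  -- step 2: summation by parts
  have hbc0 : (fun j => c j - a j) 0 = 0 := by
    simp [hc, ha, (hbc (k + 1)).1, (hbc (k - 1)).1]
  have hbcM : (fun j => c j - a j) M = 0 := by
    simp [hc, ha, (hbc (k + 1)).2, (hbc (k - 1)).2]
  have hsbp := sbp M (by omega) (fun j => c j + a j) (fun j => c j - a j) hbc0 hbcM
  have hsbp2 : ∑ j ∈ Finset.Icc 1 (M - 1),
      ((c (j + 1) - 2 * c j + c (j - 1)) + (a (j + 1) - 2 * a j + a (j - 1))) * (c j - a j)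
      = -(X1 - X0) := by
    have e1 : ∀ j ∈ Finset.Icc 1 (M - 1),
        ((c (j + 1) - 2 * c j + c (j - 1)) + (a (j + 1) - 2 * a j + a (j - 1))) * (c j - a j)
          = ((c (j + 1) + a (j + 1)) - 2 * (c j + a j) + (c (j - 1) + a (j - 1))) * (c j - a j) :=
      fun j _ => by ring
    have e2 : ∀ j ∈ Finset.range M,
        ((c (j + 1) + a (j + 1)) - (c j + a j)) * ((c (j + 1) - a (j + 1)) - (c j - a j))
          = (c (j + 1) - c j) ^ 2 - (a (j + 1) - a j) ^ 2 := fun j _ => by ring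
    rw [Finset.sum_congr rfl e1, hsbp, Finset.sum_congr rfl e2, Finset.sum_sub_distrib]
  -- step 3: the zeroth-order term
  have hN : ∑ j ∈ Finset.Icc 1 (M - 1), (c j + a j) * (c j - a j) = N1 - N0 := by
    rw [Finset.sum_congr rfl (fun j (_ : j ∈ Finset.Icc 1 (M - 1)) => show
      (c j + a j) * (c j - a j) = c j ^ 2 - a j ^ 2 from by ring), Finset.sum_sub_distrib]
  -- combine into a scalar identity
  have hmain : D1 / τ ^ 2 - D0 / τ ^ 2
      = -(X1 - X0) / (2 * h ^ 2) - (N1 - N0) / 2 + P := by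
    rw [hsum, hsbp2, hN]
  -- step 4: unfold the energies
  have hEk : energyA h τ M e k - energyA h τ M e (k - 1)
      = h * (D1 / τ ^ 2) - h * (D0 / τ ^ 2)
        + 1 / 2 * (h * N1 - h * N0 + X1 / h - X0 / h) := by
    unfold energyA nrm2 nrmx2
    rw [hk1]
    rw [← ha, ← hb, ← hc]
    have q1 : ∑ j ∈ Finset.Icc 1 (M - 1), ((c j - b j) / τ) ^ 2 = D1 / τ ^ 2 := by
      rw [hD1, Finset.sum_div]
      exact Finset.sum_congr rfl fun j _ => by rw [div_pow]
    have q0 : ∑ j ∈ Finset.Icc 1 (M - 1), ((b j - a j) / τ) ^ 2 = D0 / τ ^ 2 := by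
      rw [hD0, Finset.sum_div]
      exact Finset.sum_congr rfl fun j _ => by rw [div_pow]
    have x1 : h * ∑ j ∈ Finset.range M, ((c (j + 1) - c j) / h) ^ 2 = X1 / h := by
      rw [hX1, Finset.sum_div]
      rw [Finset.mul_sum]
      refine Finset.sum_congr rfl fun j _ => ?_
      rw [div_pow]
      field_simp
    have x0 : h * ∑ j ∈ Finset.range M, ((a (j + 1) - a j) / h) ^ 2 = X0 / h := by
      rw [hX0, Finset.sum_div]
      rw [Finset.mul_sum]
      refine Finset.sum_congr rfl fun j _ => ?_
      rw [div_pow]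
      field_simp
    rw [q1, q0, x1, x0, ← hN1, ← hN0]
    ring
  have hip : iprod h M (R k) (fun j => e (k + 1) j - e (k - 1) j) = h * P := by
    unfold iprod
    rw [hP, ← ha, ← hc]
  rw [hEk, hip,
    show h * (D1 / τ ^ 2) - h * (D0 / τ ^ 2) = h * (D1 / τ ^ 2 - D0 / τ ^ 2) from by ring,
    hmain]
  field_simp
  ring
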